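/- For a compactly supported probability measure μ and 2θ in the image H_μ([λ_min,λ_max]^c), with v = R_μ(2θ), the identity θv - (1/2)∫ log(1 - 2θλ + 2θv) dμ(λ) = (1/2)∫₀^{2θ} R_μ(u) du holds. -/

import Mathlib

open MeasureTheory Set intervalIntegral

section Aux

variable {μ : Measure ℝ} [IsProbabilityMeasure μ] {lmin lmax : ℝ}

lemma aux_inv_le_inv {p q : ℝ} (hp : 0 < p) (hpq : p ≤ q) : q⁻¹ ≤ p⁻¹ := by
  rw [inv_eq_one_div, inv_eq_one_div]
  exact one_div_le_one_div_of_le hp hpq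

lemma aux_int_inv (hae : ∀ᵐ l ∂μ, l ∈ Set.Icc lmin lmax) {x : ℝ}
    (hx : lmax < x ∨ x < lmin) : Integrable (fun l => (x - l)⁻¹) μ := by
  have hmeas : AEStronglyMeasurable (fun l => (x - l)⁻¹) μ :=
    ((measurable_const.sub measurable_id).inv).aestronglyMeasurable
  rcases hx with hx | hx
  · refine Integrable.mono' (integrable_const ((x - lmax)⁻¹)) hmeas ?_
    filter_upwards [hae] with l hl
    have h1 : 0 < x - l := by linarith [hl.2]
    rw [Real.norm_eq_abs, abs_of_pos (inv_pos.2 h1)]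
    exact aux_inv_le_inv (by linarith) (by linarith [hl.2])
  · refine Integrable.mono' (integrable_const ((lmin - x)⁻¹)) hmeas ?_
    filter_upwards [hae] with l hl
    have h1 : 0 < l - x := by linarith [hl.1]
    have h2 : (x - l)⁻¹ = -(l - x)⁻¹ := by
      rw [← inv_neg]; ring_nf
    rw [Real.norm_eq_abs, h2, abs_neg, abs_of_pos (inv_pos.2 h1)]
    exact aux_inv_le_inv (by linarith) (by linarith [hl.1])

lemma aux_int_log (hae : ∀ᵐ l ∂μ, l ∈ Set.Icc lmin lmax) {x : ℝ}
    (hx : lmax < x) : Integrable (fun l => Real.log (x - l)) μ := by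
  refine Integrable.mono' (integrable_const (|Real.log (x - lmin)| ⊔ |Real.log (x - lmax)|))
    ((measurable_const.sub measurable_id).log.aestronglyMeasurable) ?_
  filter_upwards [hae] with l hl
  have h1 : 0 < x - lmax := by linarith
  have h2 : 0 < x - l := by linarith [hl.2]
  have hub : Real.log (x - l) ≤ Real.log (x - lmin) :=
    Real.log_le_log h2 (by linarith [hl.1])
  have hlb : Real.log (x - lmax) ≤ Real.log (x - l) :=
    Real.log_le_log h1 (by linarith [hl.2])
  rw [Real.norm_eq_abs, abs_le]
  constructor
  · have := neg_abs_le (Real.log (x - lmax))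
    have := le_max_right |Real.log (x - lmin)| |Real.log (x - lmax)|
    linarith
  · have := le_abs_self (Real.log (x - lmin))
    have := le_max_left |Real.log (x - lmin)| |Real.log (x - lmax)|
    linarith

end Aux

/-- For a compactly supported probability measure `μ` with support in
`[λmin, λmax]` and `2θ` in the image `H_μ([λmin,λmax]ᶜ)`, with `v = R_μ(2θ)`,
the identity
`θv - (1/2)∫ log(1 - 2θλ + 2θv) dμ(λ) = (1/2)∫₀^{2θ} R_μ(u) du`
holds.  Here `K` is the inverse of the Hilbert transform `H_μ` and
`R γ = K γ - 1/γ` on the (punctured) interval between `0` and `2θ`;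
`2θ ∈ H_μ([λmin,λmax]ᶜ)` is encoded by `hK` applied to `γ = 2θ`, and
`1 - 2θλ + 2θv = 2θ(K_μ(2θ) - λ) > 0` on the support of `μ`. -/
theorem primitive_of_R_transform_identity
    (μ : Measure ℝ) [IsProbabilityMeasure μ] (lmin lmax θ : ℝ) (hθ : θ ≠ 0)
    (hsupp : μ (Set.Icc lmin lmax)ᶜ = 0)
    (K R : ℝ → ℝ)
    (hK : ∀ γ ∈ Set.uIoc (0 : ℝ) (2 * θ),
      K γ ∉ Set.Icc lmin lmax ∧ (∫ l, (K γ - l)⁻¹ ∂μ) = γ ∧ R γ = K γ - γ⁻¹)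
    (v : ℝ) (hv : v = R (2 * θ))
    (hpos : ∀ l ∈ Set.Icc lmin lmax, 0 < 1 - 2 * θ * l + 2 * θ * v) :
    θ * v - (1 / 2) * ∫ l, Real.log (1 - 2 * θ * l + 2 * θ * v) ∂μ
      = (1 / 2) * ∫ u in (0 : ℝ)..(2 * θ), R u := by
  have hae : ∀ᵐ l ∂μ, l ∈ Set.Icc lmin lmax := by
    rw [ae_iff]
    exact hsupp
  have hle : lmin ≤ lmax := by
    by_contra h
    rw [Set.Icc_eq_empty h, Set.compl_empty] at hsupp
    have := measure_univ (μ := μ)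
    rw [hsupp] at this
    exact zero_ne_one this
  -- the Hilbert transform and log potential
  set H : ℝ → ℝ := fun x => ∫ l, (x - l)⁻¹ ∂μ with hH_def
  set L : ℝ → ℝ := fun x => ∫ l, Real.log (x - l) ∂μ with hL_def
  have H_lb : ∀ x, lmax < x → (x - lmin)⁻¹ ≤ H x := by
    intro x hx
    have h0 : (x - lmin)⁻¹ = ∫ _l, (x - lmin)⁻¹ ∂μ := by simp
    rw [h0]
    refine integral_mono_ae (integrable_const _) (aux_int_inv hae (Or.inl hx)) ?_
    filter_upwards [hae] with l hl
    have h1 : 0 < x - l := by linarith [hl.2]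
    exact aux_inv_le_inv h1 (by linarith [hl.1])
  have H_ub : ∀ x, lmax < x → H x ≤ (x - lmax)⁻¹ := by
    intro x hx
    have h0 : (x - lmax)⁻¹ = ∫ _l, (x - lmax)⁻¹ ∂μ := by simp
    rw [h0]
    refine integral_mono_ae (aux_int_inv hae (Or.inl hx)) (integrable_const _) ?_
    filter_upwards [hae] with l hl
    have h1 : 0 < x - lmax := by linarith
    exact aux_inv_le_inv h1 (by linarith [hl.2])
  -- derivative of H
  have H_deriv : ∀ x₀, lmax < x₀ →
      HasDerivAt H (∫ l, -((x₀ - l) ^ 2)⁻¹ ∂μ) x₀ ∧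
        Integrable (fun l => -((x₀ - l) ^ 2)⁻¹) μ := by
    intro x₀ hx₀
    set ε : ℝ := (x₀ - lmax) / 2 with hε_def
    have hεpos : 0 < ε := by simp only [hε_def]; linarith
    have key := hasDerivAt_integral_of_dominated_loc_of_deriv_le (μ := μ)
      (F := fun x l => (x - l)⁻¹) (F' := fun x l => -((x - l) ^ 2)⁻¹) (x₀ := x₀)
      (bound := fun _ => (ε ^ 2)⁻¹) (Metric.ball_mem_nhds x₀ hεpos)
      (Filter.Eventually.of_forall fun x =>
        ((measurable_const.sub measurable_id).inv).aestronglyMeasurable)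
      (aux_int_inv hae (Or.inl hx₀))
      ((((measurable_const.sub measurable_id).pow_const 2).inv.neg).aestronglyMeasurable)
      ?_ (integrable_const _) ?_
    · exact ⟨key.2, key.1⟩
    · filter_upwards [hae] with l hl
      intro x hx
      rw [Metric.mem_ball, Real.dist_eq] at hx
      have h1 : ε ≤ x - l := by
        have := abs_lt.1 hx
        have : x₀ - ε < x := by linarith [this.1]
        have hεe : x₀ - ε = lmax + ε := by simp only [hε_def]; ring
        linarith [hl.2]
      have h2 : 0 < x - l := lt_of_lt_of_le hεpos h1
      rw [norm_neg, Real.norm_eq_abs, abs_of_pos (by positivity)]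
      exact aux_inv_le_inv (by positivity) (by nlinarith)
    · filter_upwards [hae] with l hl
      intro x hx
      rw [Metric.mem_ball, Real.dist_eq] at hx
      have h1 : ε ≤ x - l := by
        have := abs_lt.1 hx
        have : x₀ - ε < x := by linarith [this.1]
        have hεe : x₀ - ε = lmax + ε := by simp only [hε_def]; ring
        linarith [hl.2]
      have h2 : x - l ≠ 0 := (lt_of_lt_of_le hεpos h1).ne'
      have := ((hasDerivAt_id x).sub_const l).inv h2
      convert this using 1
      · rfl
      · rfl
      simp [neg_div, one_div]
  -- negativity of H'
  have H'_neg : ∀ x₀, lmax < x₀ → (∫ l, -((x₀ - l) ^ 2)⁻¹ ∂μ) < 0 := by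
    intro x₀ hx₀
    have hub : (∫ l, -((x₀ - l) ^ 2)⁻¹ ∂μ) ≤ -((x₀ - lmin) ^ 2)⁻¹ := by
      have h0 : -((x₀ - lmin) ^ 2)⁻¹ = ∫ _l, -((x₀ - lmin) ^ 2)⁻¹ ∂μ := by simp
      rw [h0]
      refine integral_mono_ae (H_deriv x₀ hx₀).2 (integrable_const _) ?_
      filter_upwards [hae] with l hl
      have h1 : 0 < x₀ - l := by linarith [hl.2]
      rw [neg_le_neg_iff]
      exact aux_inv_le_inv (by positivity) (by nlinarith [hl.1])
    have : 0 < ((x₀ - lmin) ^ 2)⁻¹ := by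
      have : 0 < x₀ - lmin := by linarith
      positivity
    linarith
  have H_anti : StrictAntiOn H (Set.Ioi lmax) := by
    refine strictAntiOn_of_deriv_neg (convex_Ioi lmax)
      (fun x hx => ((H_deriv x hx).1.continuousAt).continuousWithinAt) ?_
    intro x hx
    rw [interior_Ioi] at hx
    rw [(H_deriv x hx).1.deriv]
    exact H'_neg x hx
  -- derivative of L
  have L_deriv : ∀ x₀, lmax < x₀ → HasDerivAt L (H x₀) x₀ := by
    intro x₀ hx₀
    set ε : ℝ := (x₀ - lmax) / 2 with hε_def
    have hεpos : 0 < ε := by simp only [hε_def]; linarith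
    have key := hasDerivAt_integral_of_dominated_loc_of_deriv_le (μ := μ)
      (F := fun x l => Real.log (x - l)) (F' := fun x l => (x - l)⁻¹) (x₀ := x₀)
      (bound := fun _ => ε⁻¹) (Metric.ball_mem_nhds x₀ hεpos)
      (Filter.Eventually.of_forall fun x =>
        ((measurable_const.sub measurable_id).log).aestronglyMeasurable)
      (aux_int_log hae hx₀)
      ((measurable_const.sub measurable_id).inv.aestronglyMeasurable)
      ?_ (integrable_const _) ?_
    · exact key.2
    · filter_upwards [hae] with l hl
      intro x hx
      rw [Metric.mem_ball, Real.dist_eq] at hx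
      have h1 : ε ≤ x - l := by
        have := abs_lt.1 hx
        have : x₀ - ε < x := by linarith [this.1]
        have hεe : x₀ - ε = lmax + ε := by simp only [hε_def]; ring
        linarith [hl.2]
      have h2 : 0 < x - l := lt_of_lt_of_le hεpos h1
      rw [Real.norm_eq_abs, abs_of_pos (by positivity)]
      exact aux_inv_le_inv hεpos h1
    · filter_upwards [hae] with l hl
      intro x hx
      rw [Metric.mem_ball, Real.dist_eq] at hx
      have h1 : ε ≤ x - l := by
        have := abs_lt.1 hx
        have : x₀ - ε < x := by linarith [this.1]
        have hεe : x₀ - ε = lmax + ε := by simp only [hε_def]; ring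
        linarith [hl.2]
      have h2 : x - l ≠ 0 := (lt_of_lt_of_le hεpos h1).ne'
      have := (Real.hasDerivAt_log h2).comp x ((hasDerivAt_id x).sub_const l)
      convert this using 1
      · rfl
      · rfl
      simp
  have L_cont : ContinuousOn L (Set.Ioi lmax) :=
    fun x hx => ((L_deriv x hx).continuousAt).continuousWithinAt
  -- sign analysis: θ < 0 is impossible
  rcases hθ.lt_or_gt with hθneg | hθpos
  · exfalso
    have h0mem : (0 : ℝ) ∈ Set.uIoc (0 : ℝ) (2 * θ) :=
      Set.mem_uIoc.mpr (Or.inr ⟨by linarith, le_refl 0⟩)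
    obtain ⟨hnot, hint, -⟩ := hK 0 h0mem
    rw [Set.mem_Icc] at hnot
    push_neg at hnot
    rcases lt_or_ge lmax (K 0) with h | h
    · have h1 := H_lb (K 0) h
      have h2 : 0 < (K 0 - lmin)⁻¹ := by
        have : 0 < K 0 - lmin := by linarith
        positivity
      have : H (K 0) = 0 := hint
      linarith
    · have hKlt : K 0 < lmin := by
        rcases lt_or_ge (K 0) lmin with h' | h'
        · exact h'
        · exact absurd (hnot h') (not_lt.mpr h)
      have hub : (∫ l, (K 0 - l)⁻¹ ∂μ) ≤ (K 0 - lmax)⁻¹ := by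
        have h0 : (K 0 - lmax)⁻¹ = ∫ _l, (K 0 - lmax)⁻¹ ∂μ := by simp
        rw [h0]
        refine integral_mono_ae (aux_int_inv hae (Or.inr hKlt)) (integrable_const _) ?_
        filter_upwards [hae] with l hl
        have h1 : 0 < l - K 0 := by linarith [hl.1]
        have h2 : 0 < lmax - K 0 := by linarith
        have h3 : (lmax - K 0)⁻¹ ≤ (l - K 0)⁻¹ :=
          aux_inv_le_inv h1 (by linarith [hl.2])
        have e1 : (K 0 - l)⁻¹ = -(l - K 0)⁻¹ := by rw [← inv_neg]; ring_nf
        have e2 : (K 0 - lmax)⁻¹ = -(lmax - K 0)⁻¹ := by rw [← inv_neg]; ring_nf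
        rw [e1, e2]
        linarith
      have h2 : (K 0 - lmax)⁻¹ < 0 := by
        have : K 0 - lmax < 0 := by linarith
        exact inv_lt_zero.mpr this
      rw [hint] at hub
      linarith
  -- main case : θ > 0
  · set a : ℝ := 2 * θ with ha_def
    have ha : 0 < a := by simp only [ha_def]; linarith
    have hmem : ∀ γ ∈ Set.Ioc (0 : ℝ) a,
        K γ ∉ Set.Icc lmin lmax ∧ (∫ l, (K γ - l)⁻¹ ∂μ) = γ ∧ R γ = K γ - γ⁻¹ := by
      intro γ hγ
      exact hK γ (by rwa [Set.uIoc_of_le ha.le])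
    have hKgt : ∀ γ ∈ Set.Ioc (0 : ℝ) a, lmax < K γ := by
      intro γ hγ
      obtain ⟨hnot, hint, -⟩ := hmem γ hγ
      rw [Set.mem_Icc] at hnot
      push_neg at hnot
      by_contra h
      push_neg at h
      have hKlt : K γ < lmin := by
        rcases lt_or_ge (K γ) lmin with h' | h'
        · exact h'
        · exact absurd (hnot h') (not_lt.mpr h)
      have : (∫ l, (K γ - l)⁻¹ ∂μ) ≤ 0 := by
        refine integral_nonpos_of_ae ?_
        filter_upwards [hae] with l hl
        have : K γ - l < 0 := by linarith [hl.1]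
        exact le_of_lt (inv_lt_zero.mpr this)
      rw [hint] at this
      linarith [hγ.1]
    have hHK : ∀ γ ∈ Set.Ioc (0 : ℝ) a, H (K γ) = γ := fun γ hγ => (hmem γ hγ).2.1
    have hR : ∀ γ ∈ Set.Ioc (0 : ℝ) a, R γ = K γ - γ⁻¹ := fun γ hγ => (hmem γ hγ).2.2
    -- bounds on K
    have hKbnd : ∀ γ ∈ Set.Ioc (0 : ℝ) a, lmin + γ⁻¹ ≤ K γ ∧ K γ ≤ lmax + γ⁻¹ := by
      intro γ hγ
      have hx := hKgt γ hγ
      have h1 : (K γ - lmin)⁻¹ ≤ γ := by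
        have h := H_lb (K γ) hx
        rwa [hHK γ hγ] at h
      have h2 : γ ≤ (K γ - lmax)⁻¹ := by
        have h := H_ub (K γ) hx
        rwa [hHK γ hγ] at h
      have hp1 : 0 < K γ - lmin := by linarith
      have hp2 : 0 < K γ - lmax := by linarith
      constructor
      · have := (inv_le_comm₀ hp1 hγ.1).mp h1
        linarith
      · have := (le_inv_comm₀ hγ.1 hp2).mp h2
        linarith
    have hRbnd : ∀ γ ∈ Set.Ioc (0 : ℝ) a, lmin ≤ R γ ∧ R γ ≤ lmax := by
      intro γ hγ
      obtain ⟨h1, h2⟩ := hKbnd γ hγ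
      rw [hR γ hγ]
      constructor <;> linarith
    -- continuity of K
    have hKeps : ∀ γ₀ ∈ Set.Ioc (0 : ℝ) a, ∀ ε > (0 : ℝ), ∃ δ > (0 : ℝ),
        ∀ γ ∈ Set.Ioc (0 : ℝ) a, |γ - γ₀| < δ → |K γ - K γ₀| < ε := by
      intro γ₀ hγ₀ ε hε
      set x₀ : ℝ := K γ₀ with hx₀_def
      have hx₀ : lmax < x₀ := hKgt γ₀ hγ₀
      set ε' : ℝ := min ε ((x₀ - lmax) / 2) with hε'_def
      have hε'pos : 0 < ε' := lt_min hε (by linarith)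
      have hx₂ : lmax < x₀ - ε' := by
        have : ε' ≤ (x₀ - lmax) / 2 := min_le_right _ _
        linarith
      have hx₁ : lmax < x₀ + ε' := by linarith
      have hH1 : H (x₀ + ε') < γ₀ := by
        rw [← hHK γ₀ hγ₀]
        exact H_anti (Set.mem_Ioi.mpr hx₀) (Set.mem_Ioi.mpr hx₁) (by linarith)
      have hH2 : γ₀ < H (x₀ - ε') := by
        rw [← hHK γ₀ hγ₀]
        exact H_anti (Set.mem_Ioi.mpr hx₂) (Set.mem_Ioi.mpr hx₀) (by linarith)
      refine ⟨min (γ₀ - H (x₀ + ε')) (H (x₀ - ε') - γ₀), lt_min (by linarith) (by linarith),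
        ?_⟩
      intro γ hγ hδ
      have habs := abs_lt.1 hδ
      have hge : H (x₀ + ε') < γ := by
        have := habs.2
        have h := min_le_left (γ₀ - H (x₀ + ε')) (H (x₀ - ε') - γ₀)
        linarith
      have hlt : γ < H (x₀ - ε') := by
        have := habs.1
        have h := min_le_right (γ₀ - H (x₀ + ε')) (H (x₀ - ε') - γ₀)
        linarith
      have hKγ : lmax < K γ := hKgt γ hγ
      have hub : K γ < x₀ + ε' := by
        by_contra h
        push_neg at h
        rcases eq_or_lt_of_le h with h' | h'
        · rw [h'] at hge
          rw [hHK γ hγ] at hge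
          exact lt_irrefl _ hge
        · have := H_anti (Set.mem_Ioi.mpr hx₁) (Set.mem_Ioi.mpr hKγ) h'
          rw [hHK γ hγ] at this
          linarith
      have hlb : x₀ - ε' < K γ := by
        by_contra h
        push_neg at h
        rcases eq_or_lt_of_le h with h' | h'
        · rw [← h'] at hlt
          rw [hHK γ hγ] at hlt
          exact lt_irrefl _ hlt
        · have := H_anti (Set.mem_Ioi.mpr hKγ) (Set.mem_Ioi.mpr hx₂) h'
          rw [hHK γ hγ] at this
          linarith
      have : |K γ - x₀| < ε' := abs_lt.2 ⟨by linarith, by linarith⟩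
      exact lt_of_lt_of_le this (min_le_left _ _)
    have hKcont : ContinuousOn K (Set.Ioc 0 a) := by
      intro γ₀ hγ₀
      rw [Metric.continuousWithinAt_iff]
      intro ε hε
      obtain ⟨δ, hδpos, hδ⟩ := hKeps γ₀ hγ₀ ε hε
      exact ⟨δ, hδpos, fun {γ} hγ hd => by
        rw [Real.dist_eq] at hd ⊢
        exact hδ γ hγ hd⟩
    have hKcontAt : ∀ γ₀ ∈ Set.Ioo (0 : ℝ) a, ContinuousAt K γ₀ := by
      intro γ₀ hγ₀
      have hmem' : Set.Ioc (0 : ℝ) a ∈ nhds γ₀ :=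
        Filter.mem_of_superset (Ioo_mem_nhds hγ₀.1 hγ₀.2) Set.Ioo_subset_Ioc_self
      exact (hKcont γ₀ (Set.Ioo_subset_Ioc_self hγ₀)).continuousAt hmem'
    -- derivative of K
    have hKderiv : ∀ γ₀ ∈ Set.Ioo (0 : ℝ) a,
        HasDerivAt K (∫ l, -((K γ₀ - l) ^ 2)⁻¹ ∂μ)⁻¹ γ₀ := by
      intro γ₀ hγ₀
      have hmemIoc : γ₀ ∈ Set.Ioc (0 : ℝ) a := Set.Ioo_subset_Ioc_self hγ₀
      have hx₀ : lmax < K γ₀ := hKgt γ₀ hmemIoc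
      refine HasDerivAt.of_local_left_inverse (hKcontAt γ₀ hγ₀) (H_deriv (K γ₀) hx₀).1
        (H'_neg (K γ₀) hx₀).ne ?_
      filter_upwards [Ioo_mem_nhds hγ₀.1 hγ₀.2] with y hy
      exact hHK y (Set.Ioo_subset_Ioc_self hy)
    -- the primitive
    set Ψ : ℝ → ℝ := fun γ => γ * K γ - Real.log γ - L (K γ) with hΨ_def
    have hΨderiv : ∀ γ₀ ∈ Set.Ioo (0 : ℝ) a, HasDerivAt Ψ (R γ₀) γ₀ := by
      intro γ₀ hγ₀
      have hmemIoc : γ₀ ∈ Set.Ioc (0 : ℝ) a := Set.Ioo_subset_Ioc_self hγ₀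
      have hx₀ : lmax < K γ₀ := hKgt γ₀ hmemIoc
      have hKd := hKderiv γ₀ hγ₀
      have h1 : HasDerivAt (fun γ => γ * K γ)
          (1 * K γ₀ + γ₀ * (∫ l, -((K γ₀ - l) ^ 2)⁻¹ ∂μ)⁻¹) γ₀ :=
        (hasDerivAt_id γ₀).mul hKd
      have h2 : HasDerivAt Real.log γ₀⁻¹ γ₀ := Real.hasDerivAt_log (ne_of_gt hγ₀.1)
      have h3 : HasDerivAt (fun γ => L (K γ))
          (H (K γ₀) * (∫ l, -((K γ₀ - l) ^ 2)⁻¹ ∂μ)⁻¹) γ₀ :=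
        (L_deriv (K γ₀) hx₀).comp γ₀ hKd
      have h4 := (h1.sub h2).sub h3
      have h5 : R γ₀ = 1 * K γ₀ + γ₀ * (∫ l, -((K γ₀ - l) ^ 2)⁻¹ ∂μ)⁻¹ - γ₀⁻¹ -
          H (K γ₀) * (∫ l, -((K γ₀ - l) ^ 2)⁻¹ ∂μ)⁻¹ := by
        rw [hR γ₀ hmemIoc, hHK γ₀ hmemIoc]
        ring
      rw [h5]
      exact h4
    have hΨcont : ContinuousOn Ψ (Set.Ioc 0 a) := by
      have hc1 : ContinuousOn (fun γ : ℝ => γ * K γ) (Set.Ioc 0 a) :=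
        continuousOn_id.mul hKcont
      have hc2 : ContinuousOn Real.log (Set.Ioc (0 : ℝ) a) :=
        Real.continuousOn_log.mono (fun γ hγ => by
          simp only [Set.mem_compl_iff, Set.mem_singleton_iff]
          exact ne_of_gt hγ.1)
      have hc3 : ContinuousOn (fun γ => L (K γ)) (Set.Ioc 0 a) :=
        L_cont.comp hKcont (fun γ hγ => Set.mem_Ioi.mpr (hKgt γ hγ))
      exact (hc1.sub hc2).sub hc3
    -- interval integrability of R
    have hRcont : ContinuousOn R (Set.Ioc 0 a) := by
      have : ContinuousOn (fun γ : ℝ => K γ - γ⁻¹) (Set.Ioc 0 a) :=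
        hKcont.sub (continuousOn_id.inv₀ (fun γ hγ => ne_of_gt hγ.1))
      exact this.congr (fun γ hγ => hR γ hγ)
    have hRint : IntervalIntegrable R volume 0 a := by
      rw [intervalIntegrable_iff_integrableOn_Ioc_of_le ha.le]
      refine Integrable.mono' (integrable_const (|lmin| ⊔ |lmax|))
        (hRcont.aestronglyMeasurable measurableSet_Ioc) ?_
      rw [ae_restrict_iff' measurableSet_Ioc]
      refine Filter.Eventually.of_forall (fun γ hγ => ?_)
      obtain ⟨h1, h2⟩ := hRbnd γ hγ
      rw [Real.norm_eq_abs, abs_le]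
      constructor
      · have := neg_abs_le lmin
        have := le_max_left |lmin| |lmax|
        linarith
      · have := le_abs_self lmax
        have := le_max_right |lmin| |lmax|
        linarith
    -- FTC on [ε, a]
    have hFTC : ∀ ε ∈ Set.Ioo (0 : ℝ) a, ∫ u in ε..a, R u = Ψ a - Ψ ε := by
      intro ε hε
      have hsub : Set.Icc ε a ⊆ Set.Ioc 0 a := fun x hx => ⟨lt_of_lt_of_le hε.1 hx.1, hx.2⟩
      refine integral_eq_sub_of_hasDeriv_right_of_le hε.2.le (hΨcont.mono hsub)
        (fun x hx => ?_) (hRint.mono_set ?_)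
      · exact (hΨderiv x ⟨lt_trans hε.1 hx.1, hx.2⟩).hasDerivWithinAt
      · rw [Set.uIcc_of_le hε.2.le, Set.uIcc_of_le ha.le]
        exact Set.Icc_subset_Icc hε.1.le le_rfl
    -- splitting of the integral
    have hsplit : ∀ ε ∈ Set.Ioo (0 : ℝ) a,
        ∫ u in (0 : ℝ)..a, R u = (∫ u in (0 : ℝ)..ε, R u) + ∫ u in ε..a, R u := by
      intro ε hε
      have h1 : IntervalIntegrable R volume 0 ε := by
        refine hRint.mono_set ?_
        rw [Set.uIcc_of_le hε.1.le, Set.uIcc_of_le ha.le]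
        exact Set.Icc_subset_Icc le_rfl hε.2.le
      have h2 : IntervalIntegrable R volume ε a := by
        refine hRint.mono_set ?_
        rw [Set.uIcc_of_le hε.2.le, Set.uIcc_of_le ha.le]
        exact Set.Icc_subset_Icc hε.1.le le_rfl
      exact (integral_add_adjacent_intervals h1 h2).symm
    -- limits as ε → 0⁺
    have hIooMem : Set.Ioo (0 : ℝ) a ∈ nhdsWithin 0 (Set.Ioi 0) :=
      Ioo_mem_nhdsGT_of_mem ⟨le_refl 0, ha⟩
    set C : ℝ := |lmin| ⊔ |lmax| with hC_def
    have hRabs : ∀ γ ∈ Set.Ioc (0 : ℝ) a, |R γ| ≤ C := by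
      intro γ hγ
      obtain ⟨h1, h2⟩ := hRbnd γ hγ
      rw [abs_le]
      constructor
      · have := neg_abs_le lmin
        have := le_max_left |lmin| |lmax|
        linarith
      · have := le_abs_self lmax
        have := le_max_right |lmin| |lmax|
        linarith
    have htend1 : Filter.Tendsto (fun ε => ∫ u in (0 : ℝ)..ε, R u)
        (nhdsWithin 0 (Set.Ioi 0)) (nhds 0) := by
      have hbnd : ∀ᶠ ε in nhdsWithin 0 (Set.Ioi 0),
          ‖∫ u in (0 : ℝ)..ε, R u‖ ≤ C * |ε| := by
        filter_upwards [hIooMem] with ε hε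
        have h : ‖∫ u in (0 : ℝ)..ε, R u‖ ≤ C * |ε - 0| := by
          refine intervalIntegral.norm_integral_le_of_norm_le_const ?_
          intro x hx
          rw [Set.uIoc_of_le hε.1.le] at hx
          exact hRabs x ⟨hx.1, hx.2.trans hε.2.le⟩
        simpa using h
      have hCg : Filter.Tendsto (fun ε : ℝ => C * |ε|) (nhdsWithin 0 (Set.Ioi 0))
          (nhds 0) := by
        have h : Filter.Tendsto (fun ε : ℝ => C * |ε|) (nhds 0) (nhds (C * |(0 : ℝ)|)) :=
          (continuous_abs.tendsto 0).const_mul C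
        simpa using h.mono_left nhdsWithin_le_nhds
      exact squeeze_zero_norm' hbnd hCg
    have htendK : Filter.Tendsto (fun ε => ε * K ε) (nhdsWithin 0 (Set.Ioi 0)) (nhds 1) := by
      have hlo : Filter.Tendsto (fun ε : ℝ => 1 + ε * lmin) (nhdsWithin 0 (Set.Ioi 0))
          (nhds 1) := by
        have : Filter.Tendsto (fun ε : ℝ => 1 + ε * lmin) (nhds 0) (nhds (1 + 0 * lmin)) :=
          (tendsto_const_nhds.add ((continuous_id.mul continuous_const).tendsto 0))
        simpa using this.mono_left nhdsWithin_le_nhds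
      have hhi : Filter.Tendsto (fun ε : ℝ => 1 + ε * lmax) (nhdsWithin 0 (Set.Ioi 0))
          (nhds 1) := by
        have : Filter.Tendsto (fun ε : ℝ => 1 + ε * lmax) (nhds 0) (nhds (1 + 0 * lmax)) :=
          (tendsto_const_nhds.add ((continuous_id.mul continuous_const).tendsto 0))
        simpa using this.mono_left nhdsWithin_le_nhds
      refine tendsto_of_tendsto_of_tendsto_of_le_of_le' hlo hhi ?_ ?_
      · filter_upwards [hIooMem] with ε hε
        have hKb := (hKbnd ε ⟨hε.1, hε.2.le⟩).1
        have : ε * (lmin + ε⁻¹) ≤ ε * K ε := by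
          exact mul_le_mul_of_nonneg_left hKb hε.1.le
        have he : ε * (lmin + ε⁻¹) = ε * lmin + 1 := by
          rw [mul_add, mul_inv_cancel₀ (ne_of_gt hε.1)]
        linarith
      · filter_upwards [hIooMem] with ε hε
        have hKb := (hKbnd ε ⟨hε.1, hε.2.le⟩).2
        have : ε * K ε ≤ ε * (lmax + ε⁻¹) :=
          mul_le_mul_of_nonneg_left hKb hε.1.le
        have he : ε * (lmax + ε⁻¹) = ε * lmax + 1 := by
          rw [mul_add, mul_inv_cancel₀ (ne_of_gt hε.1)]
        linarith
    -- limit of the log part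
    set c : ℝ := lmax - lmin with hc_def
    have hc : 0 ≤ c := by simp only [hc_def]; linarith
    have htendlog : Filter.Tendsto (fun ε => Real.log ε + L (K ε))
        (nhdsWithin 0 (Set.Ioi 0)) (nhds 0) := by
      have hB : Filter.Tendsto
          (fun ε : ℝ => max (-Real.log (1 - ε * c)) (Real.log (1 + ε * c)))
          (nhdsWithin 0 (Set.Ioi 0)) (nhds 0) := by
        have h1 : Filter.Tendsto (fun ε : ℝ => 1 - ε * c) (nhds 0) (nhds 1) := by
          have : Filter.Tendsto (fun ε : ℝ => 1 - ε * c) (nhds 0) (nhds (1 - 0 * c)) :=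
            tendsto_const_nhds.sub ((continuous_id.mul continuous_const).tendsto 0)
          simpa using this
        have h2 : Filter.Tendsto (fun ε : ℝ => 1 + ε * c) (nhds 0) (nhds 1) := by
          have : Filter.Tendsto (fun ε : ℝ => 1 + ε * c) (nhds 0) (nhds (1 + 0 * c)) :=
            tendsto_const_nhds.add ((continuous_id.mul continuous_const).tendsto 0)
          simpa using this
        have hl1 : Filter.Tendsto (fun ε : ℝ => -Real.log (1 - ε * c)) (nhds 0) (nhds 0) := by
          have := ((Real.continuousAt_log one_ne_zero).tendsto.comp h1).neg
          simpa using this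
        have hl2 : Filter.Tendsto (fun ε : ℝ => Real.log (1 + ε * c)) (nhds 0) (nhds 0) := by
          have := (Real.continuousAt_log one_ne_zero).tendsto.comp h2
          simpa [Function.comp_def] using this
        have := hl1.max hl2
        simp only [max_self] at this
        exact this.mono_left nhdsWithin_le_nhds
      refine squeeze_zero_norm' ?_ hB
      have htc : Filter.Tendsto (fun ε : ℝ => ε * c) (nhdsWithin 0 (Set.Ioi 0)) (nhds 0) := by
        have : Filter.Tendsto (fun ε : ℝ => ε * c) (nhds 0) (nhds (0 * c)) :=
          (continuous_id.mul continuous_const).tendsto 0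
        simpa using this.mono_left nhdsWithin_le_nhds
      have hsmall : ∀ᶠ ε in nhdsWithin 0 (Set.Ioi 0), ε * c < 1 / 2 :=
        htc.eventually_lt_const (by norm_num)
      filter_upwards [hIooMem, hsmall] with ε hε hεc
      have hεIoc : ε ∈ Set.Ioc (0 : ℝ) a := ⟨hε.1, hε.2.le⟩
      have hεpos : 0 < ε := hε.1
      have hx : lmax < K ε := hKgt ε hεIoc
      have hint : Integrable (fun l => Real.log (K ε - l)) μ := aux_int_log hae hx
      have hptwise : ∀ᵐ l ∂μ, Real.log ε + Real.log (K ε - l)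
          = Real.log (ε * (K ε - l)) := by
        filter_upwards [hae] with l hl
        have h1 : 0 < K ε - l := by linarith [hl.2]
        rw [Real.log_mul (ne_of_gt hεpos) (ne_of_gt h1)]
      have hkey : Real.log ε + L (K ε) = ∫ l, Real.log (ε * (K ε - l)) ∂μ := by
        rw [← integral_congr_ae hptwise, integral_add (integrable_const _) hint,
          MeasureTheory.integral_const]
        simp [hL_def]
      rw [hkey]
      have hfint : Integrable (fun l => Real.log (ε * (K ε - l))) μ :=
        ((integrable_const (Real.log ε)).add hint).congr hptwise
      refine le_trans (MeasureTheory.norm_integral_le_integral_norm _) ?_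
      have hBconst : max (-Real.log (1 - ε * c)) (Real.log (1 + ε * c))
          = ∫ _l, max (-Real.log (1 - ε * c)) (Real.log (1 + ε * c)) ∂μ := by simp
      rw [hBconst]
      refine integral_mono_ae hfint.norm (integrable_const _) ?_
      filter_upwards [hae] with l hl
      obtain ⟨hKb1, hKb2⟩ := hKbnd ε hεIoc
      have hεK1 : ε * lmin + 1 ≤ ε * K ε := by
        have h := mul_le_mul_of_nonneg_left hKb1 hεpos.le
        have he : ε * (lmin + ε⁻¹) = ε * lmin + 1 := by
          rw [mul_add, mul_inv_cancel₀ (ne_of_gt hεpos)]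
        linarith
      have hεK2 : ε * K ε ≤ ε * lmax + 1 := by
        have h := mul_le_mul_of_nonneg_left hKb2 hεpos.le
        have he : ε * (lmax + ε⁻¹) = ε * lmax + 1 := by
          rw [mul_add, mul_inv_cancel₀ (ne_of_gt hεpos)]
        linarith
      have hεl1 : ε * lmin ≤ ε * l := mul_le_mul_of_nonneg_left hl.1 hεpos.le
      have hεl2 : ε * l ≤ ε * lmax := mul_le_mul_of_nonneg_left hl.2 hεpos.le
      have hεc : ε * c = ε * lmax - ε * lmin := by rw [hc_def]; ring
      have hεKl : ε * (K ε - l) = ε * K ε - ε * l := by ring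
      have htlo : 1 - ε * c ≤ ε * (K ε - l) := by linarith
      have hthi : ε * (K ε - l) ≤ 1 + ε * c := by linarith
      have h1c : 0 < 1 - ε * c := by linarith
      have ht0 : 0 < ε * (K ε - l) := lt_of_lt_of_le h1c htlo
      have hup : Real.log (ε * (K ε - l)) ≤ Real.log (1 + ε * c) :=
        Real.log_le_log ht0 hthi
      have hdown : Real.log (1 - ε * c) ≤ Real.log (ε * (K ε - l)) :=
        Real.log_le_log h1c htlo
      rw [Real.norm_eq_abs, abs_le]
      constructor
      · have h := le_max_left (-Real.log (1 - ε * c)) (Real.log (1 + ε * c))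
        linarith
      · have h := le_max_right (-Real.log (1 - ε * c)) (Real.log (1 + ε * c))
        linarith
    -- limit of Ψ
    have hΨtend : Filter.Tendsto Ψ (nhdsWithin 0 (Set.Ioi 0)) (nhds 1) := by
      have h := htendK.sub htendlog
      simp only [sub_zero] at h
      refine h.congr (fun ε => ?_)
      simp only [hΨ_def]
      ring
    -- the key identity
    have key : ∫ u in (0 : ℝ)..a, R u = Ψ a - 1 := by
      have hconst : Filter.Tendsto (fun _ : ℝ => ∫ u in (0 : ℝ)..a, R u)
          (nhdsWithin 0 (Set.Ioi 0)) (nhds (∫ u in (0 : ℝ)..a, R u)) := tendsto_const_nhds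
      have halt : Filter.Tendsto (fun ε => (∫ u in (0 : ℝ)..ε, R u) + (Ψ a - Ψ ε))
          (nhdsWithin 0 (Set.Ioi 0)) (nhds (0 + (Ψ a - 1))) :=
        htend1.add (tendsto_const_nhds.sub hΨtend)
      have hev : (fun _ : ℝ => ∫ u in (0 : ℝ)..a, R u)
          =ᶠ[nhdsWithin 0 (Set.Ioi 0)]
          (fun ε => (∫ u in (0 : ℝ)..ε, R u) + (Ψ a - Ψ ε)) := by
        filter_upwards [hIooMem] with ε hε
        rw [hsplit ε hε, hFTC ε hε]
      have := tendsto_nhds_unique (hconst.congr' hev) halt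
      rw [this]
      ring
    -- final assembly
    have hamem : a ∈ Set.Ioc (0 : ℝ) a := ⟨ha, le_rfl⟩
    have hva : v = K a - a⁻¹ := by rw [hv]; exact hR a hamem
    have hxa : lmax < K a := hKgt a hamem
    have hav : a * v = a * K a - 1 := by
      rw [hva, mul_sub, mul_inv_cancel₀ (ne_of_gt ha)]
    have hlogeq : ∫ l, Real.log (1 - a * l + a * v) ∂μ = Real.log a + L (K a) := by
      have hae2 : ∀ᵐ l ∂μ, Real.log (1 - a * l + a * v)
          = Real.log a + Real.log (K a - l) := by
        filter_upwards [hae] with l hl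
        have harg : 1 - a * l + a * v = a * (K a - l) := by
          linear_combination hav
        rw [harg, Real.log_mul (ne_of_gt ha) (ne_of_gt (by linarith [hl.2]))]
      rw [integral_congr_ae hae2, integral_add (integrable_const _)
        (aux_int_log hae hxa), MeasureTheory.integral_const]
      simp [hL_def]
    rw [hlogeq, key]
    simp only [hΨ_def]
    have haθ : a * v = 2 * θ * v := by rw [ha_def]
    linarith [hav]
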